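/- (Stokes' theorem for a parametrized 2-surface in ℝ³.) Let R = [a¹,b¹]×[a²,b²] ⊂ ℝ², let x : U₀ → ℝ³ be a C² map on an open neighborhood U₀ of R whose partial derivatives x₁(s) = ∂x/∂s¹(s) and x₂(s) = ∂x/∂s²(s) are linearly independent for every s ∈ R, and let F : U → ℝ³ be a C¹ vector field on an open set U containing x(R). Then ∫_R ⟪(∇×F)(x(s)), x₁(s) × x₂(s)⟫ ds¹ds² = ∫_{a¹}^{b¹} ⟪F(x(t,a²)), x₁(t,a²)⟫ dt + ∫_{a²}^{b²} ⟪F(x(b¹,t)), x₂(b¹,t)⟫ dt − ∫_{a¹}^{b¹} ⟪F(x(t,b²)), x₁(t,b²)⟫ dt − ∫_{a²}^{b²} ⟪F(x(a¹,t)), x₂(a¹,t)⟫ dt, where ∇×F is the curl of F and × is the cross product on ℝ³. -/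

import Mathlib

open MeasureTheory RealInnerProductSpace

noncomputable section

/-- The cross product on Euclidean 3-space. -/
def cross3 (u v : EuclideanSpace ℝ (Fin 3)) : EuclideanSpace ℝ (Fin 3) :=
  (WithLp.equiv 2 (Fin 3 → ℝ)).symm
    ![u 1 * v 2 - u 2 * v 1, u 2 * v 0 - u 0 * v 2, u 0 * v 1 - u 1 * v 0]

/-- The curl `∇×F` of a vector field on Euclidean 3-space. -/
def curl3 (F : EuclideanSpace ℝ (Fin 3) → EuclideanSpace ℝ (Fin 3))
    (p : EuclideanSpace ℝ (Fin 3)) : EuclideanSpace ℝ (Fin 3) :=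
  (WithLp.equiv 2 (Fin 3 → ℝ)).symm
    ![fderiv ℝ F p (EuclideanSpace.single 1 (1 : ℝ)) 2
        - fderiv ℝ F p (EuclideanSpace.single 2 (1 : ℝ)) 1,
      fderiv ℝ F p (EuclideanSpace.single 2 (1 : ℝ)) 0
        - fderiv ℝ F p (EuclideanSpace.single 0 (1 : ℝ)) 2,
      fderiv ℝ F p (EuclideanSpace.single 0 (1 : ℝ)) 1
        - fderiv ℝ F p (EuclideanSpace.single 1 (1 : ℝ)) 0]

local notation "E3" => EuclideanSpace ℝ (Fin 3)

lemma expand3 (w : E3) : w = w 0 • EuclideanSpace.single 0 (1:ℝ)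
    + w 1 • EuclideanSpace.single 1 (1:ℝ) + w 2 • EuclideanSpace.single 2 (1:ℝ) := by
  ext i; fin_cases i <;>
    simp [PiLp.add_apply, PiLp.smul_apply, EuclideanSpace.single_apply]

lemma inner_curl_cross (A : E3 →L[ℝ] E3) (u v : E3) :
    ⟪(((WithLp.equiv 2 (Fin 3 → ℝ)).symm
      ![A (EuclideanSpace.single 1 (1:ℝ)) 2 - A (EuclideanSpace.single 2 (1:ℝ)) 1,
        A (EuclideanSpace.single 2 (1:ℝ)) 0 - A (EuclideanSpace.single 0 (1:ℝ)) 2,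
        A (EuclideanSpace.single 0 (1:ℝ)) 1 - A (EuclideanSpace.single 1 (1:ℝ)) 0]) : E3),
      cross3 u v⟫ = ⟪A u, v⟫ - ⟪A v, u⟫ := by
  have hAu : A u = u 0 • A (EuclideanSpace.single 0 (1:ℝ))
      + u 1 • A (EuclideanSpace.single 1 (1:ℝ)) + u 2 • A (EuclideanSpace.single 2 (1:ℝ)) := by
    conv_lhs => rw [expand3 u]
    simp
  have hAv : A v = v 0 • A (EuclideanSpace.single 0 (1:ℝ))
      + v 1 • A (EuclideanSpace.single 1 (1:ℝ)) + v 2 • A (EuclideanSpace.single 2 (1:ℝ)) := by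
    conv_lhs => rw [expand3 v]
    simp
  rw [hAu, hAv]
  simp only [PiLp.inner_apply, RCLike.inner_apply, conj_trivial, Fin.sum_univ_three,
    PiLp.add_apply, PiLp.smul_apply, cross3, WithLp.equiv_symm_apply, PiLp.toLp_apply, smul_eq_mul]
  simp only [Matrix.cons_val_zero, Matrix.cons_val_one, Matrix.head_cons,
    Matrix.cons_val_two, Matrix.tail_cons]
  ring

lemma contOn_vec3 {α : Type*} [TopologicalSpace α] {f g h : α → ℝ} {s : Set α}
    (hf : ContinuousOn f s) (hg : ContinuousOn g s) (hh : ContinuousOn h s) :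
    ContinuousOn (fun a => (((WithLp.equiv 2 (Fin 3 → ℝ)).symm ![f a, g a, h a]) : E3)) s := by
  have hv : ContinuousOn (fun a => (![f a, g a, h a] : Fin 3 → ℝ)) s := by
    apply continuousOn_pi.2
    intro i
    fin_cases i <;> simpa
  exact (PiLp.continuous_toLp (p := 2) (β := fun _ : Fin 3 => ℝ)).comp_continuousOn hv

/-- Stokes' theorem for a parametrized 2-surface in ℝ³:
`∫_R ⟪(∇×F)(x(s)), x₁(s)×x₂(s)⟫ ds` equals the circulation of `F` around the boundary. -/
theorem stokes_theorem_surface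
    (a₁ b₁ a₂ b₂ : ℝ) (ha₁ : a₁ < b₁) (ha₂ : a₂ < b₂)
    (U₀ : Set (ℝ × ℝ)) (hU₀ : IsOpen U₀) (hRU₀ : Set.Icc (a₁, a₂) (b₁, b₂) ⊆ U₀)
    (x : ℝ × ℝ → EuclideanSpace ℝ (Fin 3)) (hx : ContDiffOn ℝ 2 x U₀)
    (x₁ x₂ : ℝ × ℝ → EuclideanSpace ℝ (Fin 3))
    (hx₁ : ∀ s, x₁ s = fderiv ℝ x s (1, 0)) (hx₂ : ∀ s, x₂ s = fderiv ℝ x s (0, 1))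
    (hreg : ∀ s ∈ Set.Icc (a₁, a₂) (b₁, b₂), LinearIndependent ℝ ![x₁ s, x₂ s])
    (U : Set (EuclideanSpace ℝ (Fin 3))) (hU : IsOpen U)
    (hxRU : x '' Set.Icc (a₁, a₂) (b₁, b₂) ⊆ U)
    (F : EuclideanSpace ℝ (Fin 3) → EuclideanSpace ℝ (Fin 3)) (hF : ContDiffOn ℝ 1 F U) :
    (∫ s in Set.Icc (a₁, a₂) (b₁, b₂), ⟪curl3 F (x s), cross3 (x₁ s) (x₂ s)⟫)
      = (∫ t in a₁..b₁, ⟪F (x (t, a₂)), x₁ (t, a₂)⟫)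
        + (∫ t in a₂..b₂, ⟪F (x (b₁, t)), x₂ (b₁, t)⟫)
        - (∫ t in a₁..b₁, ⟪F (x (t, b₂)), x₁ (t, b₂)⟫)
        - (∫ t in a₂..b₂, ⟪F (x (a₁, t)), x₂ (a₁, t)⟫) := by
  set R : Set (ℝ × ℝ) := Set.Icc (a₁, a₂) (b₁, b₂) with hRdef
  set V : Set (ℝ × ℝ) := U₀ ∩ x ⁻¹' U with hVdef
  have hV : IsOpen V := hx.continuousOn.isOpen_inter_preimage hU₀ hU
  have hRV : R ⊆ V := fun s hs => ⟨hRU₀ hs, hxRU ⟨s, hs, rfl⟩⟩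
  -- basic differentiability facts on V
  have hxC2 : ∀ s ∈ V, ContDiffAt ℝ 2 x s := fun s hs =>
    hx.contDiffAt (hU₀.mem_nhds hs.1)
  have hxd : ∀ s ∈ V, DifferentiableAt ℝ x s := fun s hs =>
    (hxC2 s hs).differentiableAt two_ne_zero
  have hdfxd : ∀ s ∈ V, DifferentiableAt ℝ (fderiv ℝ x) s := fun s hs =>
    ((hx.fderiv_of_isOpen hU₀ le_rfl).contDiffAt (hU₀.mem_nhds hs.1)).differentiableAt one_ne_zero
  have hFd : ∀ s ∈ V, DifferentiableAt ℝ F (x s) := fun s hs =>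
    (hF.contDiffAt (hU.mem_nhds hs.2)).differentiableAt one_ne_zero
  set P : ℝ × ℝ → ℝ := fun s => ⟪F (x s), x₁ s⟫ with hP
  set Q : ℝ × ℝ → ℝ := fun s => ⟪F (x s), x₂ s⟫ with hQ
  -- derivatives of P and Q on V
  have hFx : ∀ s ∈ V, HasFDerivAt (fun s => F (x s))
      ((fderiv ℝ F (x s)).comp (fderiv ℝ x s)) s := fun s hs =>
    (hFd s hs).hasFDerivAt.comp s (hxd s hs).hasFDerivAt
  have h1 : ∀ s ∈ V, HasFDerivAt x₁
      ((ContinuousLinearMap.apply ℝ E3 ((1:ℝ), (0:ℝ))).comp (fderiv ℝ (fderiv ℝ x) s)) s := by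
    intro s hs
    rw [funext hx₁]
    exact (ContinuousLinearMap.apply ℝ E3 ((1:ℝ),(0:ℝ))).hasFDerivAt.comp s
      (hdfxd s hs).hasFDerivAt
  have h2 : ∀ s ∈ V, HasFDerivAt x₂
      ((ContinuousLinearMap.apply ℝ E3 ((0:ℝ), (1:ℝ))).comp (fderiv ℝ (fderiv ℝ x) s)) s := by
    intro s hs
    rw [funext hx₂]
    exact (ContinuousLinearMap.apply ℝ E3 ((0:ℝ),(1:ℝ))).hasFDerivAt.comp s
      (hdfxd s hs).hasFDerivAt
  have hPd : ∀ s ∈ V, DifferentiableAt ℝ P s := fun s hs =>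
    ((hFx s hs).differentiableAt.inner ℝ (h1 s hs).differentiableAt)
  have hQd : ∀ s ∈ V, DifferentiableAt ℝ Q s := fun s hs =>
    ((hFx s hs).differentiableAt.inner ℝ (h2 s hs).differentiableAt)
  -- value of the derivatives
  have hPval : ∀ s ∈ V, fderiv ℝ P s (0, 1)
      = ⟪F (x s), fderiv ℝ (fderiv ℝ x) s (0,1) (1,0)⟫
        + ⟪fderiv ℝ F (x s) (x₂ s), x₁ s⟫ := by
    intro s hs
    have := ((hFx s hs).inner ℝ (h1 s hs)).fderiv
    rw [hP, this]
    simp [hx₂ s]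
  have hQval : ∀ s ∈ V, fderiv ℝ Q s (1, 0)
      = ⟪F (x s), fderiv ℝ (fderiv ℝ x) s (1,0) (0,1)⟫
        + ⟪fderiv ℝ F (x s) (x₁ s), x₂ s⟫ := by
    intro s hs
    have := ((hFx s hs).inner ℝ (h2 s hs)).fderiv
    rw [hQ, this]
    simp [hx₁ s]
  -- the key pointwise identity on V
  have key : ∀ s ∈ V, fderiv ℝ Q s (1, 0) + (-(fderiv ℝ P s)) (0, 1)
      = ⟪curl3 F (x s), cross3 (x₁ s) (x₂ s)⟫ := by
    intro s hs
    have hsymm : fderiv ℝ (fderiv ℝ x) s (0,1) (1,0)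
        = fderiv ℝ (fderiv ℝ x) s (1,0) (0,1) :=
      ((hxC2 s hs).isSymmSndFDerivAt (by simp)) (0,1) (1,0)
    rw [ContinuousLinearMap.neg_apply, hPval s hs, hQval s hs, hsymm]
    have := inner_curl_cross (fderiv ℝ F (x s)) (x₁ s) (x₂ s)
    rw [curl3, this]
    ring
  -- continuity facts on R
  have hxc : ContinuousOn x R := hx.continuousOn.mono hRU₀
  have hmaps : ∀ s ∈ R, x s ∈ U := fun s hs => hxRU ⟨s, hs, rfl⟩
  have hFxc : ContinuousOn (fun s => F (x s)) R := hF.continuousOn.comp hxc hmaps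
  have hdfc : ContinuousOn (fderiv ℝ x) R :=
    (hx.continuousOn_fderiv_of_isOpen hU₀ one_le_two).mono hRU₀
  have hx₁c : ContinuousOn x₁ R := by
    rw [funext hx₁]; exact hdfc.clm_apply continuousOn_const
  have hx₂c : ContinuousOn x₂ R := by
    rw [funext hx₂]; exact hdfc.clm_apply continuousOn_const
  have hPc : ContinuousOn P R := hFxc.inner hx₁c
  have hQc : ContinuousOn Q R := hFxc.inner hx₂c
  have hAc : ContinuousOn (fun s => fderiv ℝ F (x s)) R :=
    (hF.continuousOn_fderiv_of_isOpen hU le_rfl).comp hxc hmaps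
  have hcomp : ∀ (j i : Fin 3), ContinuousOn
      (fun s => fderiv ℝ F (x s) (EuclideanSpace.single j (1:ℝ)) i) R := fun j i =>
    (EuclideanSpace.proj i).continuous.comp_continuousOn (hAc.clm_apply continuousOn_const)
  have hprj : ∀ (i : Fin 3) (w : ℝ × ℝ → E3), ContinuousOn w R →
      ContinuousOn (fun s => w s i) R := fun i w hw =>
    (EuclideanSpace.proj i).continuous.comp_continuousOn hw
  have hcurlc : ContinuousOn (fun s => curl3 F (x s)) R := by
    unfold curl3
    exact contOn_vec3 ((hcomp 1 2).sub (hcomp 2 1)) ((hcomp 2 0).sub (hcomp 0 2))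
      ((hcomp 0 1).sub (hcomp 1 0))
  have hcrossc : ContinuousOn (fun s => cross3 (x₁ s) (x₂ s)) R := by
    unfold cross3
    exact contOn_vec3
      (((hprj 1 _ hx₁c).mul (hprj 2 _ hx₂c)).sub ((hprj 2 _ hx₁c).mul (hprj 1 _ hx₂c)))
      (((hprj 2 _ hx₁c).mul (hprj 0 _ hx₂c)).sub ((hprj 0 _ hx₁c).mul (hprj 2 _ hx₂c)))
      (((hprj 0 _ hx₁c).mul (hprj 1 _ hx₂c)).sub ((hprj 1 _ hx₁c).mul (hprj 0 _ hx₂c)))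
  have hic : ContinuousOn (fun s => (⟪curl3 F (x s), cross3 (x₁ s) (x₂ s)⟫ : ℝ)) R :=
    hcurlc.inner hcrossc
  have hIntC : IntegrableOn (fun s => (⟪curl3 F (x s), cross3 (x₁ s) (x₂ s)⟫ : ℝ)) R :=
    hic.integrableOn_compact isCompact_Icc
  have hEq : Set.EqOn (fun s => fderiv ℝ Q s (1, 0) + (-(fderiv ℝ P s)) (0, 1))
      (fun s => (⟪curl3 F (x s), cross3 (x₁ s) (x₂ s)⟫ : ℝ)) R := fun s hs => key s (hRV hs)
  have hInt : IntegrableOn (fun s => fderiv ℝ Q s (1, 0) + (-(fderiv ℝ P s)) (0, 1)) R :=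
    hIntC.congr_fun hEq.symm measurableSet_Icc
  -- interior membership
  have hmemV : ∀ p ∈ Set.Ioo a₁ b₁ ×ˢ Set.Ioo a₂ b₂ \ (∅ : Set (ℝ × ℝ)), p ∈ V := by
    rintro p ⟨⟨hp1, hp2⟩, -⟩
    exact hRV ⟨⟨hp1.1.le, hp2.1.le⟩, ⟨hp1.2.le, hp2.2.le⟩⟩
  have hle : ((a₁, a₂) : ℝ × ℝ) ≤ (b₁, b₂) := ⟨ha₁.le, ha₂.le⟩
  have green := integral_divergence_prod_Icc_of_hasFDerivAt_off_countable_of_le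
    Q (fun s => -P s) (fun s => fderiv ℝ Q s) (fun s => -(fderiv ℝ P s))
    (a₁, a₂) (b₁, b₂) hle ∅ Set.countable_empty hQc (hPc.neg)
    (fun p hp => (hQd p (hmemV p hp)).hasFDerivAt)
    (fun p hp => ((hPd p (hmemV p hp)).hasFDerivAt).neg)
    hInt
  calc (∫ s in R, (⟪curl3 F (x s), cross3 (x₁ s) (x₂ s)⟫ : ℝ))
      = ∫ s in R, (fderiv ℝ Q s (1, 0) + (-(fderiv ℝ P s)) (0, 1)) :=
        (setIntegral_congr_fun measurableSet_Icc hEq).symm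
    _ = (((∫ t in a₁..b₁, -P (t, b₂)) - ∫ t in a₁..b₁, -P (t, a₂))
          + ∫ t in a₂..b₂, Q (b₁, t)) - ∫ t in a₂..b₂, Q (a₁, t) := green
    _ = _ := by
        rw [intervalIntegral.integral_neg, intervalIntegral.integral_neg]
        simp only [hP, hQ]
        ring
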